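/- arXiv:2509.15428 — 4 statements merged into one kernel-verified Lean document; each statement's English description precedes it below -/
import Mathlib

section
/- Let H be a Kreĭn space with subspaces S = R ⊕ N where R is regular, N neutral, R ⊥ N. Then the isotropic part of the closure of S equals the closure of the isotropic part of S; that is, closure(S) ∩ S^⊥ = closure(S ∩ S^⊥). -/
open ContinuousLinearMap

noncomputable section

namespace KreinPaper

variable {H : Type*} [NormedAddCommGroup H] [InnerProductSpace ℂ H] [CompleteSpace H]

/-- The indefinite orthogonal companion of a subspace, with respect to the
indefinite inner product `[x, y] = ⟪J x, y⟫`. -/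
def kOrth (J : H →L[ℂ] H) (S : Submodule ℂ H) : Submodule ℂ H where
  carrier := {y | ∀ x ∈ S, (inner ℂ (J x) y : ℂ) = 0}
  add_mem' := by
    intro a b ha hb x hx
    simp only [Set.mem_setOf_eq] at ha hb ⊢
    rw [inner_add_right, ha x hx, hb x hx, add_zero]
  zero_mem' := by
    intro x _
    exact inner_zero_right _
  smul_mem' := by
    intro c a ha x hx
    simp only [Set.mem_setOf_eq] at ha ⊢
    rw [inner_smul_right, ha x hx, mul_zero]

/-- A regular subspace: closed, with `R ∩ R^⊥ = 0` and `R + R^⊥ = H`. -/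
def IsRegular (J : H →L[ℂ] H) (R : Submodule ℂ H) : Prop :=
  IsClosed (R : Set H) ∧ R ⊓ kOrth J R = ⊥ ∧ R ⊔ kOrth J R = ⊤

/-- A neutral subspace: the indefinite inner product vanishes on it. -/
def IsNeutral (J : H →L[ℂ] H) (N : Submodule ℂ H) : Prop :=
  ∀ n ∈ N, (inner ℂ (J n) n : ℂ) = 0

/-- Two subspaces are orthogonal in the indefinite inner product. -/
def AreKOrth (J : H →L[ℂ] H) (A B : Submodule ℂ H) : Prop :=
  ∀ a ∈ A, ∀ b ∈ B, (inner ℂ (J a) b : ℂ) = 0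

/-- An operator range: the range of a bounded operator (equivalently, of a
bounded operator on `H` itself). -/
def IsOpRange (S : Submodule ℂ H) : Prop :=
  ∃ T : H →L[ℂ] H, LinearMap.range (T : H →ₗ[ℂ] H) = S

/-- Quasi-pseudo-regular subspace: an operator range which is the orthogonal
sum of a regular subspace and a neutral subspace. -/
def IsQpr (J : H →L[ℂ] H) (S : Submodule ℂ H) : Prop :=
  IsOpRange S ∧ ∃ R N : Submodule ℂ H,
    IsRegular J R ∧ IsNeutral J N ∧ AreKOrth J R N ∧ S = R ⊔ N

/-- Pseudo-regular subspace: a closed subspace which is the orthogonal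
sum of a regular subspace and a neutral subspace. -/
def IsPseudoRegular (J : H →L[ℂ] H) (S : Submodule ℂ H) : Prop :=
  IsClosed (S : Set H) ∧ ∃ R N : Submodule ℂ H,
    IsRegular J R ∧ IsNeutral J N ∧ AreKOrth J R N ∧ S = R ⊔ N

/-- A fundamental symmetry: a selfadjoint involution. -/
def IsFundSym (J : H →L[ℂ] H) : Prop :=
  IsSelfAdjoint J ∧ J ∘L J = ContinuousLinearMap.id ℂ H

/-- The indefinite (Kreĭn space) adjoint `A* = J A† J`. -/
def kAdj (J : H →L[ℂ] H) (A : H →L[ℂ] H) : H →L[ℂ] H :=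
  J ∘L (ContinuousLinearMap.adjoint A) ∘L J

lemma mem_kOrth {J : H →L[ℂ] H} {S : Submodule ℂ H} {y : H} :
    y ∈ kOrth J S ↔ ∀ x ∈ S, (inner ℂ (J x) y : ℂ) = 0 := Iff.rfl

lemma kOrth_isClosed (J : H →L[ℂ] H) (S : Submodule ℂ H) :
    IsClosed ((kOrth J S : Set H)) := by
  have h : (kOrth J S : Set H) = ⋂ x ∈ S, ((innerSL ℂ (J x)) ⁻¹' {0}) := by
    ext y
    simp only [Set.mem_iInter, Set.mem_preimage, Set.mem_singleton_iff]
    exact mem_kOrth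
  rw [h]
  exact isClosed_biInter fun x _ =>
    isClosed_singleton.preimage (innerSL ℂ (J x)).continuous

lemma kOrth_antitone (J : H →L[ℂ] H) {S T : Submodule ℂ H} (h : S ≤ T) :
    kOrth J T ≤ kOrth J S := fun y hy x hx => hy x (h hx)

lemma neutral_pair {J : H →L[ℂ] H} {N : Submodule ℂ H} (hN : IsNeutral J N) :
    ∀ a ∈ N, ∀ b ∈ N, (inner ℂ (J a) b : ℂ) = 0 := by
  intro a ha b hb
  have h1 : (inner ℂ (J (a + b)) (a + b) : ℂ) = 0 := hN _ (N.add_mem ha hb)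
  have h2 : (inner ℂ (J (a + Complex.I • b)) (a + Complex.I • b) : ℂ) = 0 :=
    hN _ (N.add_mem ha (N.smul_mem _ hb))
  have haa : (inner ℂ (J a) a : ℂ) = 0 := hN a ha
  have hbb : (inner ℂ (J b) b : ℂ) = 0 := hN b hb
  rw [map_add, inner_add_left, inner_add_right, inner_add_right, haa, hbb] at h1
  rw [map_add, inner_add_left, inner_add_right, inner_add_right, haa,
    map_smul, inner_smul_left, inner_smul_right, inner_smul_left,
    inner_smul_right, hbb] at h2
  simp only [Complex.conj_I, zero_add, add_zero, mul_zero] at h1 h2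
  have h2' : Complex.I * inner ℂ (J a) b - Complex.I * inner ℂ (J b) a = 0 := by
    rw [mul_comm (-Complex.I)] at h2
    linear_combination h2
  have h3 : (inner ℂ (J a) b : ℂ) - inner ℂ (J b) a = 0 := by
    have hmul : Complex.I * ((inner ℂ (J a) b : ℂ) - inner ℂ (J b) a) = 0 := by
      linear_combination h2'
    rcases mul_eq_zero.1 hmul with h | h
    · exact absurd h Complex.I_ne_zero
    · exact h
  linear_combination (h1 + h3) / 2

/-- the isotropic part of the closure of `S` equals the closure of
the isotropic part of `S`. -/
theorem closure_isotropic_part (J : H →L[ℂ] H) (hJ : IsFundSym J)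
    (S R N : Submodule ℂ H) (hR : IsRegular J R) (hN : IsNeutral J N)
    (hRN : AreKOrth J R N) (hS : S = R ⊔ N) :
    S.topologicalClosure ⊓ kOrth J S = (S ⊓ kOrth J S).topologicalClosure := by
  have hRS : R ≤ S := hS ▸ le_sup_left
  have hNS : N ≤ S := hS ▸ le_sup_right
  have hNR : N ≤ kOrth J R := fun n hn r hr => hRN r hr n hn
  -- N is contained in kOrth J S
  have hNkS : N ≤ kOrth J S := by
    intro n hn x hx
    rcases Submodule.mem_sup.1 (hS ▸ hx) with ⟨r, hr, m, hm, rfl⟩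
    rw [map_add, inner_add_left, hRN r hr n hn, neutral_pair hN m hm n hn,
      add_zero]
  have hkSR : kOrth J S ≤ kOrth J R := kOrth_antitone J hRS
  -- key: anything in R ∩ kOrth J S is zero
  have hRk0 : ∀ r : H, r ∈ R → r ∈ kOrth J S → r = 0 := by
    intro r hr hrk
    have : r ∈ R ⊓ kOrth J R := ⟨hr, hkSR hrk⟩
    rw [hR.2.1] at this
    exact this
  -- N is the isotropic part of S
  have hNiso : N = S ⊓ kOrth J S := by
    refine le_antisymm (le_inf hNS hNkS) ?_
    rintro x ⟨hxS, hxk⟩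
    rcases Submodule.mem_sup.1 (hS ▸ hxS) with ⟨r, hr, m, hm, rfl⟩
    have hr0 : r ∈ kOrth J S := by
      intro y hy
      have h1 : (inner ℂ (J y) (r + m) : ℂ) = 0 := hxk y hy
      have h2 : (inner ℂ (J y) m : ℂ) = 0 := by
        rcases Submodule.mem_sup.1 (hS ▸ hy) with ⟨r', hr', m', hm', rfl⟩
        rw [map_add, inner_add_left, hRN r' hr' m hm,
          neutral_pair hN m' hm' m hm, add_zero]
      rw [inner_add_right, h2, add_zero] at h1
      exact h1
    have : r = 0 := hRk0 r hr hr0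
    rwa [this, zero_add]
  -- the continuous projection onto R along kOrth J R
  have hCompl : IsCompl R (kOrth J R) :=
    isCompl_iff.2 ⟨disjoint_iff.2 hR.2.1, codisjoint_iff.2 hR.2.2⟩
  set P : H →L[ℂ] R :=
    R.linearProjOfClosedCompl (kOrth J R) hCompl hR.1 (kOrth_isClosed J R)
    with hP
  set Q : H →L[ℂ] H := ContinuousLinearMap.id ℂ H - R.subtypeL.comp P with hQ
  have hPval : ∀ x : H, (P x : H) = (R.linearProjOfIsCompl (kOrth J R) hCompl x : H) := by
    intro x
    rw [hP]
    rw [Submodule.coe_continuous_linearProjOfClosedCompl']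
    rfl
  have hQS : ∀ s ∈ S, Q s ∈ N := by
    intro s hs
    rcases Submodule.mem_sup.1 (hS ▸ hs) with ⟨r, hr, m, hm, rfl⟩
    have h1 : (P (r + m) : H) = r := by
      rw [hPval, map_add]
      have hr' : R.linearProjOfIsCompl (kOrth J R) hCompl r = ⟨r, hr⟩ :=
        Submodule.linearProjOfIsCompl_apply_left hCompl ⟨r, hr⟩
      have hm' : R.linearProjOfIsCompl (kOrth J R) hCompl m = 0 :=
        Submodule.linearProjOfIsCompl_apply_right' hCompl (hNR hm)
      rw [hr', hm']
      simp
    have : Q (r + m) = m := by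
      rw [hQ]
      simp only [ContinuousLinearMap.sub_apply, ContinuousLinearMap.id_apply,
        ContinuousLinearMap.comp_apply, Submodule.subtypeL_apply]
      rw [h1]
      abel
    rw [this]
    exact hm
  -- Q maps closure S into closure N
  have hQcl : ∀ x ∈ S.topologicalClosure, Q x ∈ N.topologicalClosure := by
    intro x hx
    have h1 : Q x ∈ Q '' closure (S : Set H) := ⟨x, hx, rfl⟩
    have h2 : Q '' closure (S : Set H) ⊆ closure (Q '' (S : Set H)) :=
      image_closure_subset_closure_image Q.continuous
    have h3 : Q '' (S : Set H) ⊆ (N : Set H) := by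
      rintro _ ⟨s, hs, rfl⟩
      exact hQS s hs
    exact closure_mono h3 (h2 h1)
  -- closure N ⊆ kOrth J S
  have hNclk : N.topologicalClosure ≤ kOrth J S :=
    Submodule.topologicalClosure_minimal _ hNkS (kOrth_isClosed J S)
  refine le_antisymm ?_ ?_
  · rintro x ⟨hx1, hx2⟩
    have hQx : Q x ∈ N.topologicalClosure := hQcl x hx1
    have hPx : (P x : H) ∈ kOrth J S := by
      have hxQ : (P x : H) = x - Q x := by
        rw [hQ]
        simp only [ContinuousLinearMap.sub_apply, ContinuousLinearMap.id_apply,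
          ContinuousLinearMap.comp_apply, Submodule.subtypeL_apply]
        abel
      rw [hxQ]
      exact (kOrth J S).sub_mem hx2 (hNclk hQx)
    have hP0 : (P x : H) = 0 := hRk0 _ (P x).2 hPx
    have hxN : x = Q x := by
      rw [hQ]
      simp only [ContinuousLinearMap.sub_apply, ContinuousLinearMap.id_apply,
        ContinuousLinearMap.comp_apply, Submodule.subtypeL_apply, hP0,
        sub_zero]
    rw [← hNiso]
    rw [hxN]
    exact hQx
  · refine le_inf ?_ ?_
    · exact Submodule.topologicalClosure_mono inf_le_left
    · exact Submodule.topologicalClosure_minimal _ inf_le_right (kOrth_isClosed J S)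

end KreinPaper
end
end

section
/- Let {T_λ}_{λ∈Λ} be bounded operators on a Hilbert space H. Suppose there is C > 0 such that ‖∑_{λ∈F} T_λ‖ ≤ C for every finite subset F ⊆ Λ. Then ∑_{λ∈Λ} ‖T_λ* u‖² ≤ 4C² ‖u‖² for all u ∈ H, and there is a bounded operator W : H → H^Λ (the ℓ²-direct sum), Wu = (T_λ* u)_λ, with ‖W‖ ≤ 2C; consequently its adjoint T = W* : H^Λ → H satisfies T((x_λ)_λ) = ∑_λ T_λ x_λ (unconditionally convergent) for every (x_λ) ∈ H^Λ. -/
open ContinuousLinearMap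

noncomputable section

namespace KreinPaper

variable {H : Type*} [NormedAddCommGroup H] [InnerProductSpace ℂ H] [CompleteSpace H]

lemma exists_signs {Λ : Type*} (y : Λ → H) (F : Finset Λ) :
    ∃ ε : Λ → ℂ, (∀ lam, ε lam = 1 ∨ ε lam = -1) ∧
      ∑ lam ∈ F, ‖y lam‖ ^ 2 ≤ ‖∑ lam ∈ F, ε lam • y lam‖ ^ 2 := by
  classical
  induction F using Finset.cons_induction with
  | empty => exact ⟨fun _ => 1, fun _ => Or.inl rfl, by simp⟩
  | cons a F ha ih =>
    obtain ⟨ε, hε, hle⟩ := ih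
    set s := ∑ lam ∈ F, ε lam • y lam with hs
    set σ : ℂ := if 0 ≤ (inner ℂ (y a) s : ℂ).re then 1 else -1 with hσ
    refine ⟨Function.update ε a σ, ?_, ?_⟩
    · intro l
      by_cases h : l = a
      · rw [h, Function.update_self]
        by_cases h' : 0 ≤ (inner ℂ (y a) s : ℂ).re
        · exact Or.inl (by simp [hσ, h'])
        · exact Or.inr (by simp [hσ, h'])
      · rw [Function.update_of_ne h]; exact hε l
    · have hF : ∑ lam ∈ F, Function.update ε a σ lam • y lam = s := by
        rw [hs]
        refine Finset.sum_congr rfl fun lam hlam => ?_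
        rw [Function.update_of_ne (ne_of_mem_of_not_mem hlam ha)]
      rw [Finset.sum_cons, Finset.sum_cons, Function.update_self, hF]
      have hre : 0 ≤ (inner ℂ (σ • y a) s : ℂ).re := by
        rw [inner_smul_left]
        by_cases h' : 0 ≤ (inner ℂ (y a) s : ℂ).re
        · simp [hσ, h', h']
        · simp only [hσ, if_neg h']
          simp only [map_neg, map_one, neg_one_mul, Complex.neg_re]
          linarith
      have hnorm : ‖σ • y a‖ = ‖y a‖ := by
        by_cases h' : 0 ≤ (inner ℂ (y a) s : ℂ).re <;> simp [hσ, h']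
      have := norm_add_sq (𝕜 := ℂ) (σ • y a) s
      rw [this, hnorm]
      simp only [RCLike.re_to_complex]
      have h2 : ∑ lam ∈ F, ‖y lam‖ ^ 2 ≤ ‖s‖ ^ 2 := hle
      have : (0:ℝ) ≤ 2 * (inner ℂ (σ • y a) s : ℂ).re := by positivity
      linarith

lemma signs_bound {Λ : Type*} (T : Λ → H →L[ℂ] H) (C : ℝ)
    (hbd : ∀ F : Finset Λ, ‖∑ lam ∈ F, T lam‖ ≤ C)
    (ε : Λ → ℂ) (hε : ∀ lam, ε lam = 1 ∨ ε lam = -1) (F : Finset Λ) :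
    ‖∑ lam ∈ F, ε lam • T lam‖ ≤ 2 * C := by
  classical
  have hsplit : ∑ lam ∈ F, ε lam • T lam
      = (∑ lam ∈ F.filter (fun lam => ε lam = 1), T lam)
        - ∑ lam ∈ F.filter (fun lam => ¬ ε lam = 1), T lam := by
    rw [← Finset.sum_filter_add_sum_filter_not F (fun lam => ε lam = 1)
      (fun lam => ε lam • T lam), sub_eq_add_neg]
    congr 1
    · exact Finset.sum_congr rfl fun lam hlam => by
        rw [(Finset.mem_filter.1 hlam).2, one_smul]
    · rw [← Finset.sum_neg_distrib]
      refine Finset.sum_congr rfl fun lam hlam => ?_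
      have h := (Finset.mem_filter.1 hlam).2
      rcases hε lam with h1 | h1
      · exact absurd h1 h
      · rw [h1]; simp
  rw [hsplit]
  calc ‖_ - _‖ ≤ ‖_‖ + ‖_‖ := norm_sub_le _ _
    _ ≤ C + C := add_le_add (hbd _) (hbd _)
    _ = 2 * C := by ring

lemma key_est {Λ : Type*} (T : Λ → H →L[ℂ] H) (C : ℝ) (hC : 0 < C)
    (hbd : ∀ F : Finset Λ, ‖∑ lam ∈ F, T lam‖ ≤ C) (u : H) (F : Finset Λ) :
    ∑ lam ∈ F, ‖ContinuousLinearMap.adjoint (T lam) u‖ ^ 2 ≤ 4 * C ^ 2 * ‖u‖ ^ 2 := by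
  obtain ⟨ε, hε, hle⟩ := exists_signs (fun lam => ContinuousLinearMap.adjoint (T lam) u) F
  have hadj : ∑ lam ∈ F, ε lam • ContinuousLinearMap.adjoint (T lam) u
      = ContinuousLinearMap.adjoint (∑ lam ∈ F, ε lam • T lam) u := by
    rw [map_sum]
    simp only [ContinuousLinearMap.sum_apply]
    refine Finset.sum_congr rfl fun lam _ => ?_
    have hsm : ContinuousLinearMap.adjoint (ε lam • T lam)
        = starRingEnd ℂ (ε lam) • ContinuousLinearMap.adjoint (T lam) :=
      LinearIsometryEquiv.map_smulₛₗ _ _ _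
    have hcj : starRingEnd ℂ (ε lam) = ε lam := by
      rcases hε lam with h | h <;> rw [h] <;> simp
    rw [hsm, hcj, ContinuousLinearMap.smul_apply]
  refine hle.trans ?_
  rw [hadj]
  have h1 : ‖ContinuousLinearMap.adjoint (∑ lam ∈ F, ε lam • T lam) u‖
      ≤ (2 * C) * ‖u‖ := by
    refine le_trans (ContinuousLinearMap.le_opNorm _ _) ?_
    have := signs_bound T C hbd ε hε F
    rw [LinearIsometryEquiv.norm_map ContinuousLinearMap.adjoint]
    exact mul_le_mul_of_nonneg_right this (norm_nonneg u)
  calc ‖_‖^2 ≤ ((2*C)*‖u‖)^2 := by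
        exact pow_le_pow_left₀ (norm_nonneg _) h1 2
    _ = 4 * C ^ 2 * ‖u‖ ^ 2 := by ring

/-- a uniform bound `C` on finite sums of the `T_λ` gives
`∑ ‖T_λ* u‖² ≤ 4C²‖u‖²`, hence a bounded operator `W : H → H^Λ`,
`Wu = (T_λ* u)_λ`, with `‖W‖ ≤ 2C`, whose adjoint implements
`(x_λ) ↦ ∑ T_λ x_λ` (unconditionally convergent). -/
theorem bounded_partial_sums_gives_row_operator {Λ : Type*}
    (T : Λ → H →L[ℂ] H) (C : ℝ) (hC : 0 < C)
    (hbd : ∀ F : Finset Λ, ‖∑ lam ∈ F, T lam‖ ≤ C) :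
    (∀ u : H, ∀ F : Finset Λ,
        ∑ lam ∈ F, ‖ContinuousLinearMap.adjoint (T lam) u‖ ^ 2
          ≤ 4 * C ^ 2 * ‖u‖ ^ 2) ∧
    ∃ W : H →L[ℂ] lp (fun _ : Λ => H) 2,
      (∀ (u : H) (lam : Λ),
          (W u : ∀ _ : Λ, H) lam = ContinuousLinearMap.adjoint (T lam) u) ∧
      ‖W‖ ≤ 2 * C ∧
      ∀ x : lp (fun _ : Λ => H) 2,
        HasSum (fun lam => T lam ((x : ∀ _ : Λ, H) lam))
          (ContinuousLinearMap.adjoint W x) := by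
  classical
  have key := key_est T C hC hbd
  refine ⟨key, ?_⟩
  have h2t : (2:ENNReal).toReal = ((2:ℕ):ℝ) := by norm_num
  have hmem : ∀ u : H, Memℓp (fun lam => ContinuousLinearMap.adjoint (T lam) u) 2 := by
    intro u
    refine memℓp_gen' (C := 4 * C ^ 2 * ‖u‖ ^ 2) fun s => ?_
    calc ∑ i ∈ s, ‖ContinuousLinearMap.adjoint (T i) u‖ ^ (2:ENNReal).toReal
        = ∑ i ∈ s, ‖ContinuousLinearMap.adjoint (T i) u‖ ^ (2:ℕ) := by
          simp [h2t, Real.rpow_natCast]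
      _ ≤ _ := key u s
  let W₀ : H →ₗ[ℂ] lp (fun _ : Λ => H) 2 :=
    { toFun := fun u => ⟨fun lam => ContinuousLinearMap.adjoint (T lam) u, hmem u⟩
      map_add' := fun u v => lp.ext (funext fun lam => by
        simp only [lp.coeFn_add, Pi.add_apply]
        exact map_add _ u v)
      map_smul' := fun c u => lp.ext (funext fun lam => by
        simp only [lp.coeFn_smul, Pi.smul_apply, RingHom.id_apply]
        exact map_smul _ c u) }
  have hW₀app : ∀ (u : H) (lam : Λ),
      (W₀ u : ∀ _ : Λ, H) lam = ContinuousLinearMap.adjoint (T lam) u := fun u lam => rfl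
  have hbound : ∀ u : H, ‖W₀ u‖ ≤ 2 * C * ‖u‖ := by
    intro u
    refine lp.norm_le_of_forall_sum_le (by rw [h2t]; norm_num)
      (by positivity) fun s => ?_
    calc ∑ i ∈ s, ‖(W₀ u : ∀ _ : Λ, H) i‖ ^ (2:ENNReal).toReal
        = ∑ i ∈ s, ‖ContinuousLinearMap.adjoint (T i) u‖ ^ (2:ℕ) := by
          simp [h2t, Real.rpow_natCast, hW₀app]
      _ ≤ 4 * C ^ 2 * ‖u‖ ^ 2 := key u s
      _ = (2 * C * ‖u‖) ^ (2:ℕ) := by ring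
      _ = (2 * C * ‖u‖) ^ (2:ENNReal).toReal := by
          rw [h2t, Real.rpow_natCast]
  let W : H →L[ℂ] lp (fun _ : Λ => H) 2 := LinearMap.mkContinuous W₀ (2 * C) hbound
  have hWapp : ∀ (u : H) (lam : Λ),
      (W u : ∀ _ : Λ, H) lam = ContinuousLinearMap.adjoint (T lam) u := fun u lam => rfl
  refine ⟨W, hWapp, LinearMap.mkContinuous_norm_le _ (by positivity) _, fun x => ?_⟩
  have hsingle : HasSum (fun lam : Λ => lp.single 2 lam ((x : ∀ _ : Λ, H) lam)) x :=
    lp.hasSum_single ENNReal.ofNat_ne_top x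
  have h2 := hsingle.mapL (ContinuousLinearMap.adjoint W)
  have hkey : ∀ (lam : Λ) (v : H),
      ContinuousLinearMap.adjoint W (lp.single 2 lam v) = T lam v := by
    intro lam v
    apply ext_inner_right ℂ
    intro u
    rw [ContinuousLinearMap.adjoint_inner_left, lp.inner_single_left]
    rw [hWapp u lam, ← ContinuousLinearMap.adjoint_inner_left]
    rw [ContinuousLinearMap.adjoint_adjoint]
  simpa only [hkey] using h2


end KreinPaper
end
end

section
/- Let H be a Hilbert space and {P_d}_{d∈D} a net of bounded (not necessarily orthogonal) projections (P_d² = P_d) satisfying P_d P_{d'} = P_{d'} P_d = P_d whenever d' ≥ d, and ‖P_d‖ ≤ C for all d ∈ D. Let M = closure of the span of ⋃_d ran P_d and N = ⋂_d ker P_d. Then H = M ⊕ N (direct sum), the net P_d converges strongly to the bounded projection P with range M and kernel N, i.e. lim_d P_d f = P f for every f ∈ H. -/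
open ContinuousLinearMap

noncomputable section

namespace KreinPaper

variable {H : Type*} [NormedAddCommGroup H] [InnerProductSpace ℂ H] [CompleteSpace H]

open Filter

set_option linter.unusedSectionVars false
set_option linter.unusedVariables false

section NetAux

variable {D : Type*} [Nonempty D] [Preorder D] [IsDirected D (· ≤ ·)]

section Net
variable (P : D → H →L[ℂ] H)

lemma aux_range_mono
    (hmono : ∀ d d', d ≤ d' → P d' ∘L P d = P d ∧ P d ∘L P d' = P d) :
    Monotone fun d => LinearMap.range (P d : H →ₗ[ℂ] H) := by
  intro d d' h x hx
  obtain ⟨y, rfl⟩ := hx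
  exact ⟨P d y, by change P d' (P d y) = P d y; rw [← ContinuousLinearMap.comp_apply, (hmono d d' h).1]⟩

lemma aux_eventually
    (hmono : ∀ d d', d ≤ d' → P d' ∘L P d = P d ∧ P d ∘L P d' = P d)
    {x : H} (hx : x ∈ ⨆ d, LinearMap.range (P d : H →ₗ[ℂ] H)) :
    ∃ d0, ∀ d, d0 ≤ d → P d x = x := by
  rw [Submodule.mem_iSup_of_directed _ (aux_range_mono P hmono).directed_le] at hx
  obtain ⟨d0, y, rfl⟩ := hx
  refine ⟨d0, fun d hd => ?_⟩
  change P d (P d0 y) = P d0 y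
  rw [← ContinuousLinearMap.comp_apply, (hmono d0 d hd).1]

lemma aux_tendsto
    (hmono : ∀ d d', d ≤ d' → P d' ∘L P d = P d ∧ P d ∘L P d' = P d)
    (C : ℝ) (hC : ∀ d, ‖P d‖ ≤ C) {f : H}
    (hf : f ∈ (⨆ d, LinearMap.range (P d : H →ₗ[ℂ] H)).topologicalClosure) :
    Tendsto (fun d => P d f) atTop (nhds f) := by
  have hC0 : 0 ≤ C := le_trans (norm_nonneg _) (hC (Classical.arbitrary D))
  rw [Metric.tendsto_nhds]
  intro ε hε
  have hf2 : f ∈ closure (((⨆ d, LinearMap.range (P d : H →ₗ[ℂ] H)) : Submodule ℂ H) : Set H) := by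
    rw [← Submodule.topologicalClosure_coe]; exact hf
  have hf' := Metric.mem_closure_iff.mp hf2
  obtain ⟨g, hg, hfg⟩ := hf' (ε / (C + 2)) (by positivity)
  rw [dist_eq_norm] at hfg
  obtain ⟨d0, hd0⟩ := aux_eventually P hmono hg
  rw [eventually_atTop]
  refine ⟨d0, fun d hd => ?_⟩
  have h1 : P d f - f = P d (f - g) + (g - f) := by
    rw [map_sub, hd0 d hd]; abel
  have h2 : ‖P d (f - g)‖ ≤ C * ‖f - g‖ :=
    le_trans ((P d).le_opNorm _) (mul_le_mul_of_nonneg_right (hC d) (norm_nonneg _))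
  have h3 : ‖g - f‖ = ‖f - g‖ := norm_sub_rev _ _
  have : dist (P d f) f ≤ C * ‖f - g‖ + ‖f - g‖ := by
    rw [dist_eq_norm, h1]
    refine le_trans (norm_add_le _ _) ?_
    rw [h3]
    linarith
  have h4 : C * ‖f - g‖ + ‖f - g‖ < ε := by
    have : (C + 1) * ‖f - g‖ < (C + 2) * (ε / (C + 2)) := by
      apply mul_lt_mul' (by linarith) hfg (norm_nonneg _) (by linarith)
    rw [mul_div_cancel₀ _ (by linarith : C + 2 ≠ 0)] at this
    linarith
  linarith

lemma aux_zero {f : H} (hf : f ∈ ⨅ d, LinearMap.ker (P d : H →ₗ[ℂ] H)) (d : D) : P d f = 0 := by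
  have := (Submodule.mem_iInf _).mp hf d
  exact this

lemma aux_inf
    (hmono : ∀ d d', d ≤ d' → P d' ∘L P d = P d ∧ P d ∘L P d' = P d)
    (C : ℝ) (hC : ∀ d, ‖P d‖ ≤ C) :
    (⨆ d, LinearMap.range (P d : H →ₗ[ℂ] H)).topologicalClosure ⊓ (⨅ d, LinearMap.ker (P d : H →ₗ[ℂ] H)) = ⊥ := by
  rw [eq_bot_iff]
  rintro x ⟨hxM, hxN⟩
  haveI : (atTop : Filter D).NeBot := atTop_neBot_iff.mpr ⟨‹_›, ‹_›⟩
  have h1 := aux_tendsto P hmono C hC hxM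
  have h2 : Tendsto (fun d => P d x) atTop (nhds 0) := by
    simp only [aux_zero P hxN]
    exact tendsto_const_nhds
  have : x = 0 := tendsto_nhds_unique h1 h2
  simp [this]

lemma aux_ker_orth (A : H →L[ℂ] H) :
    LinearMap.ker (A : H →ₗ[ℂ] H) = (LinearMap.range (ContinuousLinearMap.adjoint A : H →ₗ[ℂ] H))ᗮ := by
  ext x
  simp only [LinearMap.mem_ker, Submodule.mem_orthogonal]
  constructor
  · rintro h y ⟨z, rfl⟩
    change inner ℂ (ContinuousLinearMap.adjoint A z) x = 0
    rw [ContinuousLinearMap.adjoint_inner_left, show A x = 0 from h, inner_zero_right]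
  · intro h
    have := h (ContinuousLinearMap.adjoint A (A x)) ⟨A x, rfl⟩
    rw [ContinuousLinearMap.adjoint_inner_left] at this
    exact inner_self_eq_zero.mp this

lemma aux_norm_le
    (hmono : ∀ d d', d ≤ d' → P d' ∘L P d = P d ∧ P d ∘L P d' = P d)
    (C : ℝ) (hC : ∀ d, ‖P d‖ ≤ C) {m n : H}
    (hm : m ∈ (⨆ d, LinearMap.range (P d : H →ₗ[ℂ] H)).topologicalClosure)
    (hn : n ∈ ⨅ d, LinearMap.ker (P d : H →ₗ[ℂ] H)) : ‖m‖ ≤ C * ‖m + n‖ := by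
  haveI : (atTop : Filter D).NeBot := atTop_neBot_iff.mpr ⟨‹_›, ‹_›⟩
  have h1 : Tendsto (fun d => ‖P d (m + n)‖) atTop (nhds ‖m‖) := by
    refine ((aux_tendsto P hmono C hC hm).norm).congr fun d => ?_
    rw [map_add, aux_zero P hn d, add_zero]
  refine le_of_tendsto h1 (Filter.Eventually.of_forall fun d => ?_)
  exact le_trans ((P d).le_opNorm _) (mul_le_mul_of_nonneg_right (hC d) (norm_nonneg _))

lemma aux_closed
    (hmono : ∀ d d', d ≤ d' → P d' ∘L P d = P d ∧ P d ∘L P d' = P d)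
    (C : ℝ) (hC : ∀ d, ‖P d‖ ≤ C) :
    IsClosed ((((⨆ d, LinearMap.range (P d : H →ₗ[ℂ] H)).topologicalClosure ⊔
      (⨅ d, LinearMap.ker (P d : H →ₗ[ℂ] H)) : Submodule ℂ H)) : Set H) := by
  set M := (⨆ d, LinearMap.range (P d : H →ₗ[ℂ] H)).topologicalClosure with hM
  set N := (⨅ d, LinearMap.ker (P d : H →ₗ[ℂ] H)) with hN
  have hC0 : 0 ≤ C := le_trans (norm_nonneg _) (hC (Classical.arbitrary D))
  have hMc : IsClosed (M : Set H) := Submodule.isClosed_topologicalClosure _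
  have hNc : IsClosed (N : Set H) := by
    rw [hN, Submodule.coe_iInf]
    exact isClosed_iInter fun d => ContinuousLinearMap.isClosed_ker (P d)
  refine IsSeqClosed.isClosed ?_
  intro x p hx hp
  have h : ∀ k : ℕ, ∃ m ∈ M, ∃ n ∈ N, m + n = x k := fun k => Submodule.mem_sup.mp (hx k)
  choose m hm n hn hmn using h
  have key : ∀ j k, ‖m j - m k‖ ≤ C * ‖x j - x k‖ := by
    intro j k
    have h1 : m j - m k ∈ M := M.sub_mem (hm j) (hm k)
    have h2 : n j - n k ∈ N := N.sub_mem (hn j) (hn k)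
    have h3 := aux_norm_le P hmono C hC h1 h2
    rwa [show (m j - m k) + (n j - n k) = x j - x k from by
      rw [← hmn j, ← hmn k]; abel] at h3
  have hcx : CauchySeq x := hp.cauchySeq
  have hcm : CauchySeq m := by
    rw [Metric.cauchySeq_iff] at hcx ⊢
    intro ε hε
    obtain ⟨K, hK⟩ := hcx (ε / (C + 1)) (by positivity)
    refine ⟨K, fun a ha b hb => ?_⟩
    have h4 := hK a ha b hb
    rw [dist_eq_norm] at h4 ⊢
    have h5 := key a b
    have h6 : C * ‖x a - x b‖ ≤ (C + 1) * ‖x a - x b‖ :=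
      mul_le_mul_of_nonneg_right (by linarith) (norm_nonneg _)
    have h7 : (C + 1) * ‖x a - x b‖ < (C + 1) * (ε / (C + 1)) :=
      mul_lt_mul_of_pos_left h4 (by linarith)
    rw [mul_div_cancel₀ _ (by linarith : C + 1 ≠ 0)] at h7
    linarith
  obtain ⟨mlim, hml⟩ := cauchySeq_tendsto_of_complete hcm
  have hmlM : mlim ∈ M := hMc.mem_of_tendsto hml (Filter.Eventually.of_forall hm)
  have hnt : Tendsto (fun k => x k - m k) atTop (nhds (p - mlim)) := hp.sub hml
  have hnN : p - mlim ∈ N := by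
    refine hNc.mem_of_tendsto hnt (Filter.Eventually.of_forall fun k => ?_)
    have : x k - m k = n k := by rw [← hmn k]; abel
    rw [this]; exact hn k
  exact Submodule.mem_sup.mpr ⟨mlim, hmlM, p - mlim, hnN, by abel⟩

lemma aux_sup
    (hproj : ∀ d, P d ∘L P d = P d)
    (hmono : ∀ d d', d ≤ d' → P d' ∘L P d = P d ∧ P d ∘L P d' = P d)
    (C : ℝ) (hC : ∀ d, ‖P d‖ ≤ C) :
    (⨆ d, LinearMap.range (P d : H →ₗ[ℂ] H)).topologicalClosure ⊔ (⨅ d, LinearMap.ker (P d : H →ₗ[ℂ] H)) = ⊤ := by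
  have hclosed := aux_closed P hmono C hC
  have hdense : ((⨆ d, LinearMap.range (P d : H →ₗ[ℂ] H)).topologicalClosure ⊔
      (⨅ d, LinearMap.ker (P d : H →ₗ[ℂ] H))).topologicalClosure = ⊤ := by
    rw [Submodule.topologicalClosure_eq_top_iff, ← Submodule.inf_orthogonal]
    have hMo : ((⨆ d, LinearMap.range (P d : H →ₗ[ℂ] H)).topologicalClosure)ᗮ =
        ⨅ d, LinearMap.ker (ContinuousLinearMap.adjoint (P d) : H →ₗ[ℂ] H) := by
      rw [← Submodule.orthogonal_orthogonal_eq_closure, Submodule.triorthogonal_eq_orthogonal,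
        ← Submodule.iInf_orthogonal]
      congr 1
      funext d
      rw [aux_ker_orth (ContinuousLinearMap.adjoint (P d)),
        ContinuousLinearMap.adjoint_adjoint]
    have hNker : ∀ d : D, LinearMap.ker (P d : H →ₗ[ℂ] H) =
        (LinearMap.range (ContinuousLinearMap.adjoint (P d) : H →ₗ[ℂ] H))ᗮ := fun d => aux_ker_orth (P d)
    have hNo : ((⨅ d, LinearMap.ker (P d : H →ₗ[ℂ] H)))ᗮ =
        (⨆ d, LinearMap.range (ContinuousLinearMap.adjoint (P d) : H →ₗ[ℂ] H)).topologicalClosure := by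
      have : (⨅ d, LinearMap.ker (P d : H →ₗ[ℂ] H)) =
          (⨆ d, LinearMap.range (ContinuousLinearMap.adjoint (P d) : H →ₗ[ℂ] H))ᗮ := by
        rw [← Submodule.iInf_orthogonal]
        exact iInf_congr hNker
      rw [this, Submodule.orthogonal_orthogonal_eq_closure]
    rw [hMo, hNo, inf_comm]
    refine aux_inf (fun d => ContinuousLinearMap.adjoint (P d)) ?_ C ?_
    · intro d d' h
      constructor
      · rw [← ContinuousLinearMap.adjoint_comp, (hmono d d' h).2]
      · rw [← ContinuousLinearMap.adjoint_comp, (hmono d d' h).1]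
    · intro d
      rw [show ‖ContinuousLinearMap.adjoint (P d)‖ = ‖P d‖ from
        LinearIsometryEquiv.norm_map _ (P d)]
      exact hC d
  rw [← hdense]
  exact (hclosed.submodule_topologicalClosure_eq).symm

end Net


end NetAux

/-- a uniformly bounded increasing net of (not necessarily
orthogonal) projections converges strongly to the projection onto
`M = closure (span ⋃ ran P_d)` along `N = ⋂ ker P_d`, and `H = M ⊕ N`. -/
theorem net_of_projections_converges {D : Type*} [Nonempty D] [Preorder D]
    [IsDirected D (· ≤ ·)] (P : D → H →L[ℂ] H)
    (hproj : ∀ d, P d ∘L P d = P d)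
    (hmono : ∀ d d', d ≤ d' → P d' ∘L P d = P d ∧ P d ∘L P d' = P d)
    (C : ℝ) (hC : ∀ d, ‖P d‖ ≤ C) :
    (⨆ d, LinearMap.range (P d : H →ₗ[ℂ] H)).topologicalClosure ⊓ (⨅ d, LinearMap.ker (P d : H →ₗ[ℂ] H)) = ⊥ ∧
    (⨆ d, LinearMap.range (P d : H →ₗ[ℂ] H)).topologicalClosure ⊔ (⨅ d, LinearMap.ker (P d : H →ₗ[ℂ] H)) = ⊤ ∧
    ∃ Q : H →L[ℂ] H, Q ∘L Q = Q ∧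
      LinearMap.range (Q : H →ₗ[ℂ] H) = (⨆ d, LinearMap.range (P d : H →ₗ[ℂ] H)).topologicalClosure ∧
      LinearMap.ker (Q : H →ₗ[ℂ] H) = (⨅ d, LinearMap.ker (P d : H →ₗ[ℂ] H)) ∧
      ∀ f : H, Filter.Tendsto (fun d => P d f) Filter.atTop (nhds (Q f)) := by
  haveI : (atTop : Filter D).NeBot := atTop_neBot_iff.mpr ⟨‹_›, ‹_›⟩
  set M := (⨆ d, LinearMap.range (P d : H →ₗ[ℂ] H)).topologicalClosure with hM
  set N := (⨅ d, LinearMap.ker (P d : H →ₗ[ℂ] H)) with hN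
  have hinf : M ⊓ N = ⊥ := aux_inf P hmono C hC
  have hsup : M ⊔ N = ⊤ := aux_sup P hproj hmono C hC
  have hcompl : IsCompl M N := ⟨disjoint_iff.mpr hinf, codisjoint_iff.mpr hsup⟩
  set pr := Submodule.linearProjOfIsCompl M N hcompl with hpr
  have hdecomp : ∀ f : H, ∃ m ∈ M, ∃ n ∈ N, m + n = f := fun f =>
    Submodule.mem_sup.mp (hsup ▸ Submodule.mem_top)
  have hval : ∀ m ∈ M, ∀ n ∈ N, (M.subtype ∘ₗ pr) (m + n) = m := by
    intro m hm n hn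
    have h1 : pr (m + n) = ⟨m, hm⟩ := by
      rw [map_add, show pr n = 0 from Submodule.linearProjOfIsCompl_apply_right' hcompl hn, add_zero]
      exact Submodule.linearProjOfIsCompl_apply_left hcompl ⟨m, hm⟩
    simp [h1]
  have hbound : ∀ f : H, ‖(M.subtype ∘ₗ pr) f‖ ≤ C * ‖f‖ := by
    intro f
    obtain ⟨m, hm, n, hn, rfl⟩ := hdecomp f
    rw [hval m hm n hn]
    exact aux_norm_le P hmono C hC hm hn
  set Q := LinearMap.mkContinuous (M.subtype ∘ₗ pr) C hbound with hQ
  have hQapply : ∀ f : H, Q f = (M.subtype ∘ₗ pr) f := fun f => rfl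
  have hQmem : ∀ f : H, Q f ∈ M := fun f => (pr f).2
  have hQM : ∀ m ∈ M, Q m = m := by
    intro m hm
    have := hval m hm 0 N.zero_mem
    rw [add_zero] at this
    rw [hQapply, this]
  refine ⟨hinf, hsup, Q, ?_, ?_, ?_, ?_⟩
  · ext f
    exact hQM _ (hQmem f)
  · refine le_antisymm ?_ ?_
    · rintro _ ⟨f, rfl⟩
      exact hQmem f
    · intro m hm
      exact ⟨m, hQM m hm⟩
  · ext f
    simp only [LinearMap.mem_ker]
    constructor
    · intro h
      obtain ⟨m, hm, n, hn, rfl⟩ := hdecomp f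
      change Q (m + n) = 0 at h
      rw [hQapply, hval m hm n hn] at h
      rw [h, zero_add]
      exact hn
    · intro h
      change Q f = 0
      rw [hQapply]
      have : pr f = 0 := (Submodule.linearProjOfIsCompl_apply_eq_zero_iff hcompl).mpr h
      simp [this]
  · intro f
    obtain ⟨m, hm, n, hn, rfl⟩ := hdecomp f
    rw [hQapply, hval m hm n hn]
    refine (aux_tendsto P hmono C hC hm).congr fun d => ?_
    rw [map_add, aux_zero P hn d, add_zero]

end KreinPaper
end
end

section
/- In the setting of the previous statement, assume additionally that H carries a Kreĭn space structure (fundamental symmetry J, indefinite adjoint A* = J A^{*_Hilbert} J) and each P_d is a normal projection: P_d* P_d = P_d P_d*, where * is the indefinite adjoint. Then the strong limit P of the net is also a normal projection, P_d* → P* strongly, ran P* = closed span of ⋃_d ran P_d*, and ker P* = ⋂_d ker P_d*. -/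
open ContinuousLinearMap

noncomputable section

namespace KreinPaper

variable {H : Type*} [NormedAddCommGroup H] [InnerProductSpace ℂ H] [CompleteSpace H]

section Aux

variable {J : H →L[ℂ] H}

lemma aux_inner_J (hJa : ContinuousLinearMap.adjoint J = J) (x y : H) :
    (inner ℂ (J x) y : ℂ) = inner ℂ x (J y) := by
  conv_lhs => rw [← hJa]
  exact ContinuousLinearMap.adjoint_inner_left J y x

lemma aux_norm_J (hJa : ContinuousLinearMap.adjoint J = J)
    (hJJ : ∀ x : H, J (J x) = x) (x : H) : ‖J x‖ = ‖x‖ := by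
  have h : (inner ℂ (J x) (J x) : ℂ) = inner ℂ x x := by
    rw [aux_inner_J hJa, hJJ]
  have h3 : ‖J x‖ ^ 2 = ‖x‖ ^ 2 := by
    have hl := inner_self_eq_norm_sq (𝕜 := ℂ) (J x)
    have hr := inner_self_eq_norm_sq (𝕜 := ℂ) x
    rw [← hl, ← hr, h]
  calc ‖J x‖ = Real.sqrt (‖J x‖ ^ 2) := (Real.sqrt_sq (norm_nonneg _)).symm
    _ = Real.sqrt (‖x‖ ^ 2) := by rw [h3]
    _ = ‖x‖ := Real.sqrt_sq (norm_nonneg _)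

lemma aux_kadj_comp (hJJ : ∀ x : H, J (J x) = x) (A B : H →L[ℂ] H) :
    kAdj J (A ∘L B) = kAdj J B ∘L kAdj J A := by
  ext x
  simp [kAdj, ContinuousLinearMap.adjoint_comp, hJJ]

lemma aux_kadj_kadj (hJa : ContinuousLinearMap.adjoint J = J)
    (hJJ : ∀ x : H, J (J x) = x) (A : H →L[ℂ] H) :
    kAdj J (kAdj J A) = A := by
  ext x
  simp [kAdj, ContinuousLinearMap.adjoint_comp, ContinuousLinearMap.adjoint_adjoint,
    hJa, hJJ]

lemma aux_kadj_inner (hJa : ContinuousLinearMap.adjoint J = J)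
    (hJJ : ∀ x : H, J (J x) = x) (A : H →L[ℂ] H) (x y : H) :
    (inner ℂ (J (A x)) y : ℂ) = inner ℂ (J x) (kAdj J A y) := by
  have h1 : (inner ℂ (J (A x)) y : ℂ) = inner ℂ x (ContinuousLinearMap.adjoint A (J y)) := by
    rw [aux_inner_J hJa, ContinuousLinearMap.adjoint_inner_right]
  have h2 : (inner ℂ (J x) (kAdj J A y) : ℂ)
      = inner ℂ x (ContinuousLinearMap.adjoint A (J y)) := by
    have : kAdj J A y = J (ContinuousLinearMap.adjoint A (J y)) := rfl
    rw [this, aux_inner_J hJa, hJJ]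
  rw [h1, h2]

lemma aux_kadj_norm (hJa : ContinuousLinearMap.adjoint J = J)
    (hJJ : ∀ x : H, J (J x) = x) (A : H →L[ℂ] H) (x : H) :
    ‖kAdj J A x‖ ≤ ‖A‖ * ‖x‖ := by
  have h : kAdj J A x = J (ContinuousLinearMap.adjoint A (J x)) := rfl
  rw [h, aux_norm_J hJa hJJ]
  calc ‖ContinuousLinearMap.adjoint A (J x)‖
      ≤ ‖ContinuousLinearMap.adjoint A‖ * ‖J x‖ := (ContinuousLinearMap.adjoint A).le_opNorm _
    _ = ‖A‖ * ‖x‖ := by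
        rw [aux_norm_J hJa hJJ]
        congr 1
        exact LinearIsometryEquiv.norm_map (ContinuousLinearMap.adjoint (𝕜 := ℂ)) A

end Aux

/-- if moreover each `P_d` is a normal projection with respect to
the indefinite adjoint, then the strong limit `Q` is a normal projection,
`P_d* → Q*` strongly, `ran Q*` is the closed span of the `ran P_d*`, and
`ker Q* = ⋂ ker P_d*`. -/
theorem net_of_normal_projections_limit_normal {D : Type*} [Nonempty D]
    [Preorder D] [IsDirected D (· ≤ ·)] (J : H →L[ℂ] H) (hJ : IsFundSym J)
    (P : D → H →L[ℂ] H)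
    (hproj : ∀ d, P d ∘L P d = P d)
    (hmono : ∀ d d', d ≤ d' → P d' ∘L P d = P d ∧ P d ∘L P d' = P d)
    (C : ℝ) (hC : ∀ d, ‖P d‖ ≤ C)
    (hnorm : ∀ d, P d ∘L kAdj J (P d) = kAdj J (P d) ∘L P d)
    (Q : H →L[ℂ] H) (hQproj : Q ∘L Q = Q)
    (hQlim : ∀ f : H, Filter.Tendsto (fun d => P d f) Filter.atTop (nhds (Q f))) :
    Q ∘L kAdj J Q = kAdj J Q ∘L Q ∧
    (∀ f : H, Filter.Tendsto (fun d => kAdj J (P d) f) Filter.atTop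
        (nhds (kAdj J Q f))) ∧
    LinearMap.range (kAdj J Q : H →ₗ[ℂ] H)
      = (⨆ d, LinearMap.range (kAdj J (P d) : H →ₗ[ℂ] H)).topologicalClosure ∧
    LinearMap.ker (kAdj J Q : H →ₗ[ℂ] H) = ⨅ d, LinearMap.ker (kAdj J (P d) : H →ₗ[ℂ] H) := by
  classical
  haveI : (Filter.atTop : Filter D).NeBot :=
    Filter.atTop_neBot_iff.mpr ⟨‹Nonempty D›, ‹IsDirected D (· ≤ ·)›⟩
  obtain ⟨hJsa, hJ2⟩ := hJ
  have hJa : ContinuousLinearMap.adjoint J = J := hJsa.adjoint_eq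
  have hJJ : ∀ x : H, J (J x) = x := fun x => by
    have := ContinuousLinearMap.ext_iff.mp hJ2 x
    simpa using this
  have hC0 : 0 ≤ C := le_trans (norm_nonneg (P (Classical.arbitrary D))) (hC _)
  -- Q absorbs each P d
  have hQP : ∀ d, Q ∘L P d = P d := by
    intro d
    ext x
    have h1 : Filter.Tendsto (fun d' => P d' (P d x)) Filter.atTop (nhds (Q (P d x))) :=
      hQlim (P d x)
    have h2 : Filter.Tendsto (fun d' => P d' (P d x)) Filter.atTop (nhds (P d x)) := by
      refine Filter.Tendsto.congr' ?_ (tendsto_const_nhds (x := P d x))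
      filter_upwards [Filter.eventually_ge_atTop d] with d' hd'
      exact (ContinuousLinearMap.ext_iff.mp (hmono d d' hd').1 x).symm
    simpa using tendsto_nhds_unique h1 h2
  have hPQ : ∀ d, P d ∘L Q = P d := by
    intro d
    ext x
    have h1 : Filter.Tendsto (fun d' => P d (P d' x)) Filter.atTop (nhds (P d (Q x))) :=
      ((P d).continuous.tendsto (Q x)).comp (hQlim x)
    have h2 : Filter.Tendsto (fun d' => P d (P d' x)) Filter.atTop (nhds (P d x)) := by
      refine Filter.Tendsto.congr' ?_ (tendsto_const_nhds (x := P d x))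
      filter_upwards [Filter.eventually_ge_atTop d] with d' hd'
      exact (ContinuousLinearMap.ext_iff.mp (hmono d d' hd').2 x).symm
    simpa using tendsto_nhds_unique h1 h2
  -- adjoint identities
  have hQdQs : ∀ d, kAdj J (P d) ∘L kAdj J Q = kAdj J (P d) := by
    intro d
    have := aux_kadj_comp hJJ Q (P d)
    rw [hQP d] at this
    exact this.symm
  have hQsQd : ∀ d, kAdj J Q ∘L kAdj J (P d) = kAdj J (P d) := by
    intro d
    have := aux_kadj_comp hJJ (P d) Q
    rw [hPQ d] at this
    exact this.symm
  have hQsidem : kAdj J Q ∘L kAdj J Q = kAdj J Q := by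
    have := aux_kadj_comp hJJ Q Q
    rw [hQproj] at this
    exact this.symm
  have hQdmono : ∀ d d', d ≤ d' → kAdj J (P d') ∘L kAdj J (P d) = kAdj J (P d) := by
    intro d d' h
    have := aux_kadj_comp hJJ (P d) (P d')
    rw [(hmono d d' h).2] at this
    exact this.symm
  -- the union of the ranges of the adjoints
  set V : Submodule ℂ H := ⨆ d, LinearMap.range (kAdj J (P d) : H →ₗ[ℂ] H) with hV
  have hrmono : ∀ d d', d ≤ d' →
      LinearMap.range (kAdj J (P d) : H →ₗ[ℂ] H) ≤ LinearMap.range (kAdj J (P d') : H →ₗ[ℂ] H) := by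
    intro d d' h
    rintro x ⟨y, rfl⟩
    exact ⟨kAdj J (P d) y, by simp only [ContinuousLinearMap.coe_coe]; rw [← ContinuousLinearMap.comp_apply, hQdmono d d' h]⟩
  have hdir : Directed (· ≤ ·) fun d => LinearMap.range (kAdj J (P d) : H →ₗ[ℂ] H) := by
    intro a b
    obtain ⟨c, hac, hbc⟩ := directed_of (· ≤ ·) a b
    exact ⟨c, hrmono a c hac, hrmono b c hbc⟩
  -- every `kAdj J Q f` lies in the closure of `V`
  have hVQs : ∀ f : H, kAdj J Q f ∈ V.topologicalClosure := by
    intro f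
    rw [← Submodule.orthogonal_orthogonal_eq_closure]
    rw [Submodule.mem_orthogonal]
    intro u hu
    have hu' : ∀ x ∈ V, (inner ℂ x u : ℂ) = 0 := (Submodule.mem_orthogonal V u).mp hu
    have hPd0 : ∀ d, P d (J u) = 0 := by
      intro d
      have hmem : kAdj J (P d) (J (P d (J u))) ∈ V := by
        refine Submodule.mem_iSup_of_mem d ?_
        exact LinearMap.mem_range_self _ _
      have h0 : (inner ℂ (kAdj J (P d) (J (P d (J u)))) u : ℂ) = 0 := hu' _ hmem
      have hval : kAdj J (P d) (J (P d (J u)))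
          = J (ContinuousLinearMap.adjoint (P d) (P d (J u))) := by
        show J (ContinuousLinearMap.adjoint (P d) (J (J (P d (J u)))))
          = J (ContinuousLinearMap.adjoint (P d) (P d (J u)))
        rw [hJJ]
      rw [hval, aux_inner_J hJa, ContinuousLinearMap.adjoint_inner_left] at h0
      exact inner_self_eq_zero.mp h0
    have hQJu : Q (J u) = 0 := by
      have h1 := hQlim (J u)
      have h2 : Filter.Tendsto (fun d => P d (J u)) Filter.atTop (nhds 0) := by
        simpa [hPd0] using (tendsto_const_nhds (x := (0 : H))
          (f := (Filter.atTop : Filter D)))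
      exact tendsto_nhds_unique h1 h2
    have : (inner ℂ u (kAdj J Q f) : ℂ)
        = inner ℂ (Q (J u)) (J f) := by
      show (inner ℂ u (J (ContinuousLinearMap.adjoint Q (J f))) : ℂ) = _
      rw [← aux_inner_J hJa, ContinuousLinearMap.adjoint_inner_right]
    rw [this, hQJu, inner_zero_left]
  -- strong convergence of the adjoints
  have hconv : ∀ f : H, Filter.Tendsto (fun d => kAdj J (P d) f) Filter.atTop
      (nhds (kAdj J Q f)) := by
    intro f
    have hsplit : ∀ d, kAdj J (P d) f = kAdj J (P d) (kAdj J Q f) := by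
      intro d
      conv_lhs => rw [← hQdQs d]
      rfl
    set g := kAdj J Q f with hg
    suffices h : Filter.Tendsto (fun d => kAdj J (P d) g) Filter.atTop (nhds g) by
      exact h.congr fun d => (hsplit d).symm
    have hgcl : g ∈ closure (V : Set H) := by
      exact hVQs f
    rw [Metric.tendsto_nhds]
    intro ε hε
    obtain ⟨x, hxV, hx⟩ := Metric.mem_closure_iff.mp hgcl (ε / (C + 2)) (by positivity)
    obtain ⟨d0, hd0⟩ := (Submodule.mem_iSup_of_directed _ hdir).mp hxV
    filter_upwards [Filter.eventually_ge_atTop d0] with d hd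
    have hx_fix : kAdj J (P d) x = x := by
      obtain ⟨y, rfl⟩ := hd0
      simp only [ContinuousLinearMap.coe_coe]; rw [← ContinuousLinearMap.comp_apply, hQdmono d0 d hd]
    have hgx : ‖g - x‖ < ε / (C + 2) := by
      rw [← dist_eq_norm]; exact hx
    have h1 : dist (kAdj J (P d) g) g ≤ C * ‖g - x‖ + ‖g - x‖ := by
      rw [dist_eq_norm]
      have hrw : kAdj J (P d) g - g = kAdj J (P d) (g - x) + (x - g) := by
        rw [map_sub, hx_fix]; abel
      rw [hrw]
      refine (norm_add_le _ _).trans ?_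
      refine add_le_add ?_ (le_of_eq (norm_sub_rev x g))
      calc ‖kAdj J (P d) (g - x)‖ ≤ ‖P d‖ * ‖g - x‖ := aux_kadj_norm hJa hJJ _ _
        _ ≤ C * ‖g - x‖ := mul_le_mul_of_nonneg_right (hC d) (norm_nonneg _)
    have h2 : C * ‖g - x‖ + ‖g - x‖ < C * (ε / (C + 2)) + ε / (C + 2) := by
      have hgx0 : 0 ≤ ‖g - x‖ := norm_nonneg _
      rcases eq_or_lt_of_le hC0 with hc | hc
      · simpa [← hc] using hgx
      · exact add_lt_add_of_le_of_lt
          (le_of_lt (mul_lt_mul_of_pos_left hgx hc)) hgx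
    have h3 : C * (ε / (C + 2)) + ε / (C + 2) ≤ ε := by
      have hc2 : (0 : ℝ) < C + 2 := by linarith
      have heq : C * (ε / (C + 2)) + ε / (C + 2) = (C + 1) * ε / (C + 2) := by
        field_simp
      rw [heq, div_le_iff₀ hc2]
      nlinarith [hε.le]
    exact lt_of_le_of_lt h1 (lt_of_lt_of_le h2 h3)
  -- the invariant inner product identity in the limit
  have hkey : ∀ f g : H,
      (inner ℂ (J (kAdj J Q f)) (kAdj J Q g) : ℂ) = inner ℂ (J (Q f)) (Q g) := by
    intro f g
    have hterm : ∀ d, (inner ℂ (J (kAdj J (P d) f)) (kAdj J (P d) g) : ℂ)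
        = inner ℂ (J (P d f)) (P d g) := by
      intro d
      rw [aux_kadj_inner hJa hJJ (kAdj J (P d)) f, aux_kadj_kadj hJa hJJ,
        aux_kadj_inner hJa hJJ (P d) f]
      congr 1
      rw [← ContinuousLinearMap.comp_apply, ← ContinuousLinearMap.comp_apply, hnorm d]
    have h1 : Filter.Tendsto (fun d => (inner ℂ (J (kAdj J (P d) f)) (kAdj J (P d) g) : ℂ))
        Filter.atTop (nhds (inner ℂ (J (kAdj J Q f)) (kAdj J Q g))) := by
      exact Filter.Tendsto.inner ((J.continuous.tendsto _).comp (hconv f)) (hconv g)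
    have h2 : Filter.Tendsto (fun d => (inner ℂ (J (P d f)) (P d g) : ℂ))
        Filter.atTop (nhds (inner ℂ (J (Q f)) (Q g))) := by
      exact Filter.Tendsto.inner ((J.continuous.tendsto _).comp (hQlim f)) (hQlim g)
    exact tendsto_nhds_unique (h1.congr fun d => hterm d) h2
  refine ⟨?_, hconv, ?_, ?_⟩
  · -- normality of Q
    ext f
    have hext : ∀ g : H, (inner ℂ (J ((Q ∘L kAdj J Q) f)) g : ℂ)
        = inner ℂ (J ((kAdj J Q ∘L Q) f)) g := by
      intro g
      have hL : (inner ℂ (J (Q (kAdj J Q f))) g : ℂ) = inner ℂ (J (kAdj J Q f)) (kAdj J Q g) :=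
        aux_kadj_inner hJa hJJ Q _ g
      have hR : (inner ℂ (J (kAdj J Q (Q f))) g : ℂ) = inner ℂ (J (Q f)) (Q g) := by
        rw [aux_kadj_inner hJa hJJ (kAdj J Q) _ g, aux_kadj_kadj hJa hJJ]
      show (inner ℂ (J (Q (kAdj J Q f))) g : ℂ) = inner ℂ (J (kAdj J Q (Q f))) g
      rw [hL, hR, hkey f g]
    have hJeq : J ((Q ∘L kAdj J Q) f) = J ((kAdj J Q ∘L Q) f) :=
      ext_inner_right ℂ hext
    have := congrArg J hJeq
    rwa [hJJ, hJJ] at this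
  · -- range identity
    refine le_antisymm ?_ ?_
    · rintro x ⟨f, rfl⟩
      exact hVQs f
    · refine Submodule.topologicalClosure_minimal _ ?_ ?_
      · refine iSup_le fun d => ?_
        rintro x ⟨y, rfl⟩
        exact ⟨kAdj J (P d) y, by simp only [ContinuousLinearMap.coe_coe]; rw [← ContinuousLinearMap.comp_apply, hQsQd d]⟩
      · have hset : (LinearMap.range (kAdj J Q : H →ₗ[ℂ] H) : Set H) = {x | kAdj J Q x = x} := by
          ext x
          constructor
          · rintro ⟨y, rfl⟩
            show kAdj J Q (kAdj J Q y) = kAdj J Q y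
            rw [← ContinuousLinearMap.comp_apply, hQsidem]
          · intro hx
            exact ⟨x, hx⟩
        rw [hset]
        exact isClosed_eq (kAdj J Q).continuous continuous_id
  · -- kernel identity
    ext x
    simp only [LinearMap.mem_ker, Submodule.mem_iInf]
    constructor
    · intro hx d
      have : kAdj J (P d) x = kAdj J (P d) (kAdj J Q x) := by
        conv_lhs => rw [← hQdQs d]
        rfl
      simp only [ContinuousLinearMap.coe_coe]; rw [this, show kAdj J Q x = 0 from hx, map_zero]
    · intro hx
      have h0 : Filter.Tendsto (fun d => kAdj J (P d) x) Filter.atTop (nhds 0) := by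
        simpa [show ∀ d, kAdj J (P d) x = 0 from hx] using (tendsto_const_nhds (x := (0 : H))
          (f := (Filter.atTop : Filter D)))
      exact tendsto_nhds_unique (hconv x) h0

end KreinPaper
end
end
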